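/- For a density operator ρ commuting with self-adjoint H and any operator A with pinching A_diag onto H's eigenspaces, Tr(A_diag† ρ A_diag) equals the time average lim_{T→∞} (1/T)∫₀^T Tr(ρ A(t) A†) dt, where A(t) = e^{iHt} A e^{−iHt}. -/

import Mathlib

open scoped Matrix ComplexOrder Matrix.Norms.L2Operator

private lemma stmt9aux_pow {d : Type*} [Fintype d] [DecidableEq d]
    {m : Type*} [Fintype m] (P : m → Matrix d d ℂ)
    (hidem : ∀ l, P l * P l = P l)
    (horth : ∀ l l', l ≠ l' → P l * P l' = 0)
    (hsum : ∑ l, P l = 1)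
    (a : m → ℂ) (n : ℕ) :
    (∑ l, a l • P l) ^ n = ∑ l, (a l ^ n) • P l := by
  induction n with
  | zero => simp [hsum]
  | succ n ih =>
    rw [pow_succ, ih, Finset.sum_mul_sum]
    refine Finset.sum_congr rfl fun l _ => ?_
    rw [Finset.sum_eq_single l]
    · rw [Matrix.smul_mul, Matrix.mul_smul, hidem, smul_smul, ← pow_succ]
    · intro b _ hb
      rw [Matrix.smul_mul, Matrix.mul_smul, horth l b (fun h => hb h.symm),
        smul_zero, smul_zero]
    · intro h; exact absurd (Finset.mem_univ l) h

private lemma stmt9aux_exp {d : Type*} [Fintype d] [DecidableEq d]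
    {m : Type*} [Fintype m] (P : m → Matrix d d ℂ)
    (hidem : ∀ l, P l * P l = P l)
    (horth : ∀ l l', l ≠ l' → P l * P l' = 0)
    (hsum : ∑ l, P l = 1)
    (a : m → ℂ) :
    NormedSpace.exp (∑ l, a l • P l) = ∑ l, Complex.exp (a l) • P l := by
  rw [NormedSpace.exp_eq_tsum (𝕂 := ℂ)]
  have h1 : (fun n : ℕ => ((n.factorial : ℂ))⁻¹ • (∑ l, a l • P l) ^ n)
      = fun n : ℕ => ∑ l, (((n.factorial : ℂ))⁻¹ * a l ^ n) • P l := by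
    funext n
    rw [stmt9aux_pow P hidem horth hsum, Finset.smul_sum]
    simp [smul_smul]
  have h2 : ∀ l : m, HasSum (fun n : ℕ => (((n.factorial : ℂ))⁻¹ * a l ^ n) • P l)
      (Complex.exp (a l) • P l) := by
    intro l
    have hs : HasSum (fun n : ℕ => ((n.factorial : ℂ))⁻¹ * a l ^ n) (Complex.exp (a l)) := by
      have h := (NormedSpace.expSeries_summable' (𝕂 := ℂ) (𝔸 := ℂ) (a l)).hasSum
      simp only [smul_eq_mul] at h
      convert h using 2
      · rfl
      rw [Complex.exp_eq_exp_ℂ, NormedSpace.exp_eq_tsum (𝕂 := ℂ)]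
      simp [smul_eq_mul]
    exact hs.smul_const (P l)
  have total := hasSum_sum (s := Finset.univ) (fun l _ => h2 l)
  have ht := total.tsum_eq
  rw [← h1] at ht
  exact ht

set_option maxHeartbeats 2000000 in
theorem stmt9 {d : Type*} [Fintype d] [DecidableEq d]
    {m : Type*} [Fintype m]
    (P : m → Matrix d d ℂ) (E : m → ℝ)
    (hherm : ∀ l, (P l).IsHermitian)
    (hidem : ∀ l, P l * P l = P l)
    (horth : ∀ l l', l ≠ l' → P l * P l' = 0)
    (hsum : ∑ l, P l = 1)
    (hEinj : Function.Injective E)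
    (H : Matrix d d ℂ) (hH : H = ∑ l, (E l : ℂ) • P l)
    (ρ : Matrix d d ℂ) (hρ : ρ.PosSemidef) (hρ1 : ρ.trace = 1)
    (hρH : ρ * H = H * ρ)
    (A : Matrix d d ℂ)
    (Adiag : Matrix d d ℂ) (hAdiag : Adiag = ∑ l, P l * A * P l)
    (At : ℝ → Matrix d d ℂ)
    (hAt : ∀ t : ℝ, At t =
      NormedSpace.exp ((Complex.I * (t : ℂ)) • H) * A *
        NormedSpace.exp ((-(Complex.I * (t : ℂ))) • H)) :
    Filter.Tendsto
      (fun T : ℝ => (T : ℂ)⁻¹ • ∫ t in (0:ℝ)..T, (ρ * At t * Aᴴ).trace)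
      Filter.atTop (nhds ((Adiagᴴ * ρ * Adiag).trace)) := by
  classical
  -- basic spectral facts
  have hHP : ∀ k, H * P k = (E k : ℂ) • P k := by
    intro k
    rw [hH, Finset.sum_mul, Finset.sum_eq_single k]
    · rw [Matrix.smul_mul, hidem]
    · intro b _ hb
      rw [Matrix.smul_mul, horth b k hb, smul_zero]
    · intro h; exact absurd (Finset.mem_univ k) h
  have hPH : ∀ k, P k * H = (E k : ℂ) • P k := by
    intro k
    rw [hH, Finset.mul_sum, Finset.sum_eq_single k]
    · rw [Matrix.mul_smul, hidem]
    · intro b _ hb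
      rw [Matrix.mul_smul, horth k b hb.symm, smul_zero]
    · intro h; exact absurd (Finset.mem_univ k) h
  -- ρ commutes with the projections
  have hPρP : ∀ k l, k ≠ l → P k * ρ * P l = 0 := by
    intro k l hkl
    have e1 : P k * ρ * H * P l = (E l : ℂ) • (P k * ρ * P l) := by
      rw [mul_assoc (P k * ρ), hHP l, Matrix.mul_smul]
    have key : P k * ρ * H = P k * H * ρ := by
      rw [mul_assoc, hρH, ← mul_assoc]
    have e2 : P k * H * ρ * P l = (E k : ℂ) • (P k * ρ * P l) := by
      rw [hPH k, Matrix.smul_mul, Matrix.smul_mul]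
    have e3 : ((E l : ℂ) - (E k : ℂ)) • (P k * ρ * P l) = 0 := by
      rw [sub_smul, ← e1, key, e2, sub_self]
    have hne : (E l : ℂ) - (E k : ℂ) ≠ 0 := by
      rw [sub_ne_zero]
      exact_mod_cast fun h => hkl (hEinj h).symm
    rcases smul_eq_zero.mp e3 with h | h
    · exact absurd h hne
    · exact h
  have hρP : ∀ k, ρ * P k = P k * ρ := by
    intro k
    have ha : ρ * P k = P k * ρ * P k := by
      have h1 : ∑ j, P j * ρ * P k = P k * ρ * P k :=
        Finset.sum_eq_single k (fun b _ hb => hPρP b k hb)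
          (fun h => absurd (Finset.mem_univ k) h)
      calc ρ * P k = 1 * (ρ * P k) := (one_mul _).symm
        _ = (∑ j, P j) * (ρ * P k) := by rw [hsum]
        _ = ∑ j, P j * ρ * P k := by
            rw [Finset.sum_mul]
            exact Finset.sum_congr rfl fun j _ => (mul_assoc _ _ _).symm
        _ = P k * ρ * P k := h1
    have hb : P k * ρ = P k * ρ * P k := by
      have h1 : ∑ j, P k * ρ * P j = P k * ρ * P k :=
        Finset.sum_eq_single k (fun b _ hb => hPρP k b hb.symm)
          (fun h => absurd (Finset.mem_univ k) h)
      calc P k * ρ = (P k * ρ) * 1 := (mul_one _).symm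
        _ = (P k * ρ) * ∑ j, P j := by rw [hsum]
        _ = ∑ j, P k * ρ * P j := Finset.mul_sum _ _ _
        _ = P k * ρ * P k := h1
    rw [ha]; exact hb.symm
  -- exponential of the Hamiltonian
  have hexp : ∀ z : ℂ, NormedSpace.exp (z • H) = ∑ l, Complex.exp (z * E l) • P l := by
    intro z
    have hz : z • H = ∑ l, (z * (E l : ℂ)) • P l := by
      rw [hH, Finset.smul_sum]
      exact Finset.sum_congr rfl fun l _ => smul_smul z _ (P l)
    rw [hz, stmt9aux_exp P hidem horth hsum]
  -- the trace as a double sum of exponentials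
  have htr : ∀ t : ℝ, (ρ * At t * Aᴴ).trace
      = ∑ k, ∑ l, Complex.exp ((Complex.I * ((E k : ℂ) - (E l : ℂ))) * t)
          * (ρ * (P k * A * P l) * Aᴴ).trace := by
    intro t
    rw [hAt t, hexp, hexp]
    simp only [Finset.sum_mul, Finset.mul_sum, Matrix.smul_mul, Matrix.mul_smul,
      smul_smul, Matrix.trace_sum, Matrix.trace_smul, smul_eq_mul]
    rw [Finset.sum_comm]
    refine Finset.sum_congr rfl fun k _ => Finset.sum_congr rfl fun l _ => ?_
    rw [← Complex.exp_add]
    congr 2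
    ring
  -- rewrite the Cesàro means
  have hcont : ∀ (w c : ℂ), Continuous fun t : ℝ => Complex.exp (w * t) * c :=
    fun w c => (Complex.continuous_exp.comp (continuous_const.mul Complex.continuous_ofReal)).mul
      continuous_const
  have hI : ∀ T : ℝ, (∫ t in (0:ℝ)..T, (ρ * At t * Aᴴ).trace)
      = ∑ k, ∑ l, (∫ t in (0:ℝ)..T,
          Complex.exp ((Complex.I * ((E k : ℂ) - (E l : ℂ))) * t))
            * (ρ * (P k * A * P l) * Aᴴ).trace := by
    intro T
    calc (∫ t in (0:ℝ)..T, (ρ * At t * Aᴴ).trace)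
        = ∫ t in (0:ℝ)..T, ∑ k, ∑ l,
            Complex.exp ((Complex.I * ((E k : ℂ) - (E l : ℂ))) * t)
              * (ρ * (P k * A * P l) * Aᴴ).trace :=
          intervalIntegral.integral_congr (fun t _ => htr t)
      _ = ∑ k, ∫ t in (0:ℝ)..T, ∑ l,
            Complex.exp ((Complex.I * ((E k : ℂ) - (E l : ℂ))) * t)
              * (ρ * (P k * A * P l) * Aᴴ).trace :=
          intervalIntegral.integral_finset_sum (fun k _ =>
            ((continuous_finset_sum Finset.univ (fun l _ =>
              hcont _ _)).intervalIntegrable _ _))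
      _ = ∑ k, ∑ l, ∫ t in (0:ℝ)..T,
            Complex.exp ((Complex.I * ((E k : ℂ) - (E l : ℂ))) * t)
              * (ρ * (P k * A * P l) * Aᴴ).trace :=
          Finset.sum_congr rfl fun k _ =>
            intervalIntegral.integral_finset_sum (fun l _ =>
              ((hcont _ _).intervalIntegrable _ _))
      _ = ∑ k, ∑ l, (∫ t in (0:ℝ)..T,
            Complex.exp ((Complex.I * ((E k : ℂ) - (E l : ℂ))) * t))
              * (ρ * (P k * A * P l) * Aᴴ).trace :=
          Finset.sum_congr rfl fun k _ => Finset.sum_congr rfl fun l _ =>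
            intervalIntegral.integral_mul_const _ _
  -- the limit of each term
  have main : Filter.Tendsto
      (fun T : ℝ => (T : ℂ)⁻¹ • ∫ t in (0:ℝ)..T, (ρ * At t * Aᴴ).trace)
      Filter.atTop
      (nhds (∑ k, ∑ l, if k = l then (ρ * (P k * A * P l) * Aᴴ).trace else 0)) := by
    have heq : ∀ T : ℝ, (T : ℂ)⁻¹ • (∫ t in (0:ℝ)..T, (ρ * At t * Aᴴ).trace)
        = ∑ k, ∑ l, (T : ℂ)⁻¹ • ((∫ t in (0:ℝ)..T,
            Complex.exp ((Complex.I * ((E k : ℂ) - (E l : ℂ))) * t))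
              * (ρ * (P k * A * P l) * Aᴴ).trace) := by
      intro T
      rw [hI T, Finset.smul_sum]
      exact Finset.sum_congr rfl fun k _ => Finset.smul_sum
    refine Filter.Tendsto.congr (fun T => (heq T).symm) ?_
    refine tendsto_finset_sum _ fun k _ => tendsto_finset_sum _ fun l _ => ?_
    by_cases hkl : k = l
    · subst hkl
      rw [if_pos rfl]
      refine Filter.Tendsto.congr' ?_ tendsto_const_nhds
      filter_upwards [Filter.eventually_ne_atTop (0:ℝ)] with T hT
      have hT' : (T : ℂ) ≠ 0 := by exact_mod_cast hT
      simp only [sub_self, mul_zero, zero_mul, Complex.exp_zero,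
        intervalIntegral.integral_const, smul_eq_mul, sub_zero, Complex.real_smul,
        Complex.ofReal_one, mul_one]
      rw [inv_mul_cancel_left₀ hT']
    · rw [if_neg hkl]
      set w : ℂ := Complex.I * ((E k : ℂ) - (E l : ℂ)) with hw_def
      have hw : w ≠ 0 := by
        refine mul_ne_zero Complex.I_ne_zero ?_
        rw [sub_ne_zero]
        exact_mod_cast fun h => hkl (hEinj h)
      set c : ℂ := (ρ * (P k * A * P l) * Aᴴ).trace with hc_def
      have hnorm1 : ∀ s : ℝ, ‖Complex.exp (w * s)‖ = 1 := by
        intro s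
        rw [Complex.norm_exp]
        have : (w * s).re = 0 := by
          simp [hw_def, Complex.mul_re, Complex.mul_im]
        rw [this, Real.exp_zero]
      have hb : ∀ T : ℝ, ‖(T : ℂ)⁻¹ • ((∫ t in (0:ℝ)..T,
          Complex.exp (w * t)) * c)‖ ≤ ‖(T : ℂ)⁻¹‖ * (2 / ‖w‖ * ‖c‖) := by
        intro T
        rw [norm_smul]
        gcongr
        rw [integral_exp_mul_complex hw, norm_mul, norm_div]
        gcongr
        calc ‖Complex.exp (w * (T:ℝ)) - Complex.exp (w * ((0:ℝ):ℂ))‖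
            ≤ ‖Complex.exp (w * (T:ℝ))‖ + ‖Complex.exp (w * ((0:ℝ):ℂ))‖ := norm_sub_le _ _
          _ = 2 := by rw [hnorm1 T, hnorm1 0]; norm_num
      refine squeeze_zero_norm hb ?_
      have h0 : Filter.Tendsto (fun T : ℝ => ‖(T : ℂ)⁻¹‖) Filter.atTop (nhds 0) := by
        have h0' : Filter.Tendsto (fun T : ℝ => |T|⁻¹) Filter.atTop (nhds 0) :=
          tendsto_inv_atTop_zero.comp Filter.tendsto_abs_atTop_atTop
        refine h0'.congr fun T => ?_
        rw [norm_inv, Complex.norm_real, Real.norm_eq_abs]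
      simpa using h0.mul_const (2 / ‖w‖ * ‖c‖)
  -- identify the limit with Tr(Adiagᴴ ρ Adiag)
  have hAdH : Adiagᴴ = ∑ l, P l * Aᴴ * P l := by
    rw [hAdiag, Matrix.conjTranspose_sum]
    refine Finset.sum_congr rfl fun l _ => ?_
    rw [Matrix.conjTranspose_mul, Matrix.conjTranspose_mul, (hherm l).eq, mul_assoc]
  have hck : ∀ k, ((P k * Aᴴ * P k) * ρ * (P k * A * P k)).trace
      = (ρ * (P k * A * P k) * Aᴴ).trace := by
    intro k
    have h1 : (P k * Aᴴ * P k) * ρ * (P k * A * P k)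
        = (P k * Aᴴ) * (ρ * (P k * A * P k)) := by
      calc (P k * Aᴴ * P k) * ρ * (P k * A * P k)
          = (P k * Aᴴ) * ((P k * ρ) * (P k * (A * P k))) := by
            simp only [mul_assoc]
        _ = (P k * Aᴴ) * ((ρ * P k) * (P k * (A * P k))) := by rw [← hρP k]
        _ = (P k * Aᴴ) * (ρ * ((P k * P k) * (A * P k))) := by
            simp only [mul_assoc]
        _ = (P k * Aᴴ) * (ρ * (P k * (A * P k))) := by rw [hidem]
        _ = (P k * Aᴴ) * (ρ * (P k * A * P k)) := by simp only [mul_assoc]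
    rw [h1, Matrix.trace_mul_comm]
    have h2 : (ρ * (P k * A * P k)) * (P k * Aᴴ) = ρ * (P k * A * P k) * Aᴴ := by
      calc (ρ * (P k * A * P k)) * (P k * Aᴴ)
          = ρ * (P k * (A * ((P k * P k) * Aᴴ))) := by simp only [mul_assoc]
        _ = ρ * (P k * (A * (P k * Aᴴ))) := by rw [hidem]
        _ = ρ * (P k * A * P k) * Aᴴ := by simp only [mul_assoc]
    rw [h2]
  have hz : ∀ l k, l ≠ k → (P l * Aᴴ * P l * ρ) * (P k * A * P k) = 0 := by
    intro l k hlk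
    calc (P l * Aᴴ * P l * ρ) * (P k * A * P k)
        = (P l * Aᴴ) * ((P l * ρ * P k) * (A * P k)) := by simp only [mul_assoc]
      _ = 0 := by rw [hPρP l k hlk, zero_mul, mul_zero]
  have hRHS : (Adiagᴴ * ρ * Adiag).trace
      = ∑ k, ∑ l, (if k = l then (ρ * (P k * A * P l) * Aᴴ).trace else 0) := by
    rw [hAdH, hAdiag, Finset.sum_mul, Finset.sum_mul_sum, Matrix.trace_sum]
    refine Finset.sum_congr rfl fun l _ => ?_
    rw [Matrix.trace_sum]
    refine Finset.sum_congr rfl fun k _ => ?_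
    by_cases hlk : l = k
    · subst hlk
      rw [if_pos rfl]
      exact hck l
    · rw [if_neg hlk, hz l k hlk, Matrix.trace_zero]
  rw [hRHS]
  exact main
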